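/- Let m, n be natural numbers, α ∈ (1,∞), and C_1, …, C_n real numbers with 1 < C_i ≤ m+1. Let X_1, …, X_n be mutually independent random variables taking values in {0,1,…,m} with P(X_i = k) ≤ 1/C_i for all k and all i. Then there exist mutually independent random variables Z_1, …, Z_n taking values in {0,1,…,m} such that for each i the probability mass function of Z_i has the form f_{Z_i} = (1/C_i)·1_A + (1 − ⌊C_i⌋/C_i)·1_{{x}} for some set A ⊆ {0,…,m} with |A| = ⌊C_i⌋ and some x ∈ {0,…,m} \ A (the second term vanishing when C_i is an integer), and H_α(X_1 + ⋯ + X_n) ≥ H_α(Z_1 + ⋯ + Z_n). -/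

import Mathlib

open MeasureTheory ProbabilityTheory Real

/-- The Rényi entropy `H_α(X) = (1−α)⁻¹ log Σ_{n∈ℤ} P(X=n)^α` of an integer-valued
random variable `X`, with respect to an explicitly given measure `μ`. -/
noncomputable def renyiEntropyM {Ω : Type*} [MeasurableSpace Ω] (μ : Measure Ω)
    (α : ℝ) (X : Ω → ℤ) : ℝ :=
  (1 - α)⁻¹ * Real.log (∑' n : ℤ, (μ {ω | X ω = n}).toReal ^ α)

open Finset

/-- The polytope of pmfs on `{0,…,m}` bounded by `1/Cv`. -/
def slab (m : ℕ) (Cv : ℝ) : Set (ℤ → ℝ) :=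
  {f | (∀ k, 0 ≤ f k) ∧ (∀ k, k ∉ Finset.Icc (0:ℤ) m → f k = 0) ∧
    (∀ k, f k ≤ 1 / Cv) ∧ ∑ k ∈ Finset.Icc (0:ℤ) m, f k = 1}

/-- The extreme points of the slab. -/
def extSet (m : ℕ) (Cv : ℝ) : Set (ℤ → ℝ) :=
  {f | ∃ A : Finset ℤ, A ⊆ Finset.Icc (0:ℤ) m ∧ (A.card : ℤ) = ⌊Cv⌋ ∧
    ((((⌊Cv⌋ : ℝ) = Cv) ∧ f = fun k => if k ∈ A then 1 / Cv else 0) ∨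
     (∃ x ∈ Finset.Icc (0:ℤ) m, x ∉ A ∧
        f = fun k => (if k ∈ A then 1 / Cv else 0) +
          (if k = x then 1 - (⌊Cv⌋ : ℝ) / Cv else 0)))}

lemma slab_convex (m : ℕ) (Cv : ℝ) : Convex ℝ (slab m Cv) := by
  intro f hf g hg a b ha hb hab
  obtain ⟨hf0, hfz, hfc, hfs⟩ := hf
  obtain ⟨hg0, hgz, hgc, hgs⟩ := hg
  refine ⟨?_, ?_, ?_, ?_⟩
  · intro k
    have h1 := hf0 k; have h2 := hg0 k
    simp only [Pi.add_apply, Pi.smul_apply, smul_eq_mul]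
    nlinarith
  · intro k hk
    simp [Pi.add_apply, hfz k hk, hgz k hk]
  · intro k
    have h1 := hfc k; have h2 := hgc k
    simp only [Pi.add_apply, Pi.smul_apply, smul_eq_mul]
    calc a * f k + b * g k ≤ a * (1/Cv) + b * (1/Cv) :=
          add_le_add (mul_le_mul_of_nonneg_left h1 ha) (mul_le_mul_of_nonneg_left h2 hb)
      _ = 1 / Cv := by rw [← add_mul, hab, one_mul]
  · simp only [Pi.add_apply, Pi.smul_apply, smul_eq_mul]
    rw [Finset.sum_add_distrib, ← Finset.mul_sum, ← Finset.mul_sum, hfs, hgs]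
    simpa using hab

lemma extSet_subset_slab (m : ℕ) (Cv : ℝ) (h1 : 1 < Cv) :
    extSet m Cv ⊆ slab m Cv := by
  have hCv0 : (0:ℝ) < Cv := lt_trans one_pos h1
  have hc0 : (0:ℝ) < 1 / Cv := by positivity
  rintro f ⟨A, hA, hcard, hf⟩
  have hfloor_le : (⌊Cv⌋ : ℝ) ≤ Cv := Int.floor_le Cv
  have hfloor_lt : Cv < (⌊Cv⌋ : ℝ) + 1 := Int.lt_floor_add_one Cv
  have hAcard : (A.card : ℝ) = (⌊Cv⌋ : ℝ) := by exact_mod_cast hcard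
  rcases hf with ⟨hint, rfl⟩ | ⟨x, hx, hxA, rfl⟩
  · refine ⟨?_, ?_, ?_, ?_⟩
    · intro k; positivity
    · intro k hk
      have : k ∉ A := fun h => hk (hA h)
      simp [this]
    · intro k
      by_cases hk : k ∈ A
      · simp [hk]
      · simp [hk]; positivity
    · rw [Finset.sum_ite_mem, Finset.inter_eq_right.mpr hA, Finset.sum_const, nsmul_eq_mul,
        hAcard, hint]
      field_simp
  · have hres0 : 0 ≤ 1 - (⌊Cv⌋:ℝ) / Cv := by
      have : (⌊Cv⌋:ℝ) / Cv ≤ 1 := by rw [div_le_one hCv0]; exact hfloor_le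
      linarith
    have hresc : 1 - (⌊Cv⌋:ℝ) / Cv ≤ 1 / Cv := by
      rw [sub_le_iff_le_add, ← add_div, le_div_iff₀ hCv0, one_mul]
      linarith
    refine ⟨?_, ?_, ?_, ?_⟩
    · intro k; positivity
    · intro k hk
      have hkA : k ∉ A := fun h => hk (hA h)
      have hkx : k ≠ x := fun h => hk (h ▸ hx)
      simp [hkA, hkx]
    · intro k
      by_cases hkA : k ∈ A
      · have hkx : k ≠ x := fun h => hxA (h ▸ hkA)
        simp [hkA, hkx]
      · by_cases hkx : k = x
        · subst hkx; simpa [hkA] using hresc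
        · simp [hkA, hkx]; positivity
    · rw [Finset.sum_add_distrib, Finset.sum_ite_mem, Finset.inter_eq_right.mpr hA,
        Finset.sum_const, nsmul_eq_mul, Finset.sum_ite_eq' (Finset.Icc (0:ℤ) m) x, if_pos hx,
        hAcard]
      field_simp
      ring

lemma small_case (m : ℕ) (Cv : ℝ) (h1 : 1 < Cv) (f : ℤ → ℝ) (hf : f ∈ slab m Cv)
    (hsmall : ((Finset.Icc (0:ℤ) m).filter (fun k => f k ≠ 0 ∧ f k ≠ 1/Cv)).card ≤ 1) :
    f ∈ extSet m Cv := by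
  classical
  have hCv0 : (0:ℝ) < Cv := lt_trans one_pos h1
  obtain ⟨h0, hz, hc, hs⟩ := hf
  set I := (Finset.Icc (0:ℤ) m).filter (fun k => f k ≠ 0 ∧ f k ≠ 1/Cv) with hIdef
  set A := (Finset.Icc (0:ℤ) m).filter (fun k => f k = 1/Cv) with hAdef
  have hAsub : A ⊆ Finset.Icc (0:ℤ) m := Finset.filter_subset _ _
  have hsplit : ∑ k ∈ A, f k + ∑ k ∈ (Finset.Icc (0:ℤ) m).filter (fun k => ¬ f k = 1/Cv), f k
      = 1 := by
    rw [Finset.sum_filter_add_sum_filter_not, hs]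
  have hAsum : ∑ k ∈ A, f k = (A.card : ℝ) * (1 / Cv) := by
    rw [Finset.sum_congr rfl (fun k hk => (Finset.mem_filter.mp hk).2), Finset.sum_const,
      nsmul_eq_mul]
  by_cases hI : I = ∅
  · have hall : ∀ k ∈ Finset.Icc (0:ℤ) m, f k = 0 ∨ f k = 1/Cv := by
      intro k hk
      by_contra h
      push_neg at h
      have : k ∈ I := Finset.mem_filter.mpr ⟨hk, h.1, h.2⟩
      simp [hI] at this
    have hzero : ∑ k ∈ (Finset.Icc (0:ℤ) m).filter (fun k => ¬ f k = 1/Cv), f k = 0 := by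
      apply Finset.sum_eq_zero
      intro k hk
      obtain ⟨hk1, hk2⟩ := Finset.mem_filter.mp hk
      rcases hall k hk1 with h | h
      · exact h
      · exact absurd h hk2
    have hcardCv : (A.card : ℝ) = Cv := by
      rw [hzero, add_zero, hAsum] at hsplit
      field_simp at hsplit
      linarith
    have hfloorA : (A.card : ℤ) = ⌊Cv⌋ := by
      rw [← hcardCv]
      rw [show ((A.card : ℝ)) = ((A.card : ℤ) : ℝ) by push_cast; ring, Int.floor_intCast]
    refine ⟨A, hAsub, hfloorA, Or.inl ⟨?_, ?_⟩⟩
    · rw [← hfloorA]; push_cast; exact hcardCv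
    · funext k
      by_cases hkA : k ∈ A
      · rw [if_pos hkA]; exact (Finset.mem_filter.mp hkA).2
      · rw [if_neg hkA]
        by_cases hk : k ∈ Finset.Icc (0:ℤ) m
        · rcases hall k hk with h | h
          · exact h
          · exact absurd (Finset.mem_filter.mpr ⟨hk, h⟩) hkA
        · exact hz k hk
  · obtain ⟨x, hxI⟩ : ∃ x, I = {x} :=
      Finset.card_eq_one.mp (le_antisymm hsmall (Finset.card_pos.mpr
        (Finset.nonempty_iff_ne_empty.mpr hI)))
    have hxmem : x ∈ I := by rw [hxI]; exact Finset.mem_singleton_self x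
    obtain ⟨hxIcc, hx0, hxc⟩ := Finset.mem_filter.mp hxmem
    have hfx0 : 0 < f x := (h0 x).lt_of_ne (Ne.symm hx0)
    have hfxc : f x < 1/Cv := (hc x).lt_of_ne hxc
    have hxA : x ∉ A := fun h => hxc (Finset.mem_filter.mp h).2
    have hall : ∀ k ∈ Finset.Icc (0:ℤ) m, k ≠ x → f k = 0 ∨ f k = 1/Cv := by
      intro k hk hkx
      by_contra h
      push_neg at h
      have : k ∈ I := Finset.mem_filter.mpr ⟨hk, h.1, h.2⟩
      rw [hxI, Finset.mem_singleton] at this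
      exact hkx this
    have hxmem2 : x ∈ (Finset.Icc (0:ℤ) m).filter (fun k => ¬ f k = 1/Cv) :=
      Finset.mem_filter.mpr ⟨hxIcc, hxc⟩
    have hsum2 : ∑ k ∈ (Finset.Icc (0:ℤ) m).filter (fun k => ¬ f k = 1/Cv), f k = f x := by
      apply Finset.sum_eq_single_of_mem x hxmem2
      intro b hb hbx
      obtain ⟨hb1, hb2⟩ := Finset.mem_filter.mp hb
      rcases hall b hb1 hbx with h | h
      · exact h
      · exact absurd h hb2
    rw [hsum2, hAsum] at hsplit
    have hlow : (A.card : ℝ) < Cv := by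
      have h' : (A.card : ℝ) * (1/Cv) < 1 := by linarith
      rw [mul_one_div, div_lt_one hCv0] at h'
      exact h'
    have hhigh : Cv < (A.card : ℝ) + 1 := by
      have h2 : (A.card : ℝ) * (1/Cv) = 1 - f x := by linarith
      rw [mul_one_div, div_eq_iff hCv0.ne'] at h2
      have h3 : f x * Cv < 1 := by
        have := (lt_div_iff₀ hCv0).mp hfxc
        linarith [this]
      nlinarith [hfx0, hCv0]
    have hfloorA : (A.card : ℤ) = ⌊Cv⌋ := by
      symm
      rw [Int.floor_eq_iff]
      constructor
      · push_cast; linarith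
      · push_cast; linarith
    have hresid : f x = 1 - ((⌊Cv⌋ : ℝ)) / Cv := by
      rw [← hfloorA]
      push_cast
      have : (A.card : ℝ) * (1/Cv) = (A.card : ℝ) / Cv := by ring
      linarith [hsplit, this]
    refine ⟨A, hAsub, hfloorA, Or.inr ⟨x, hxIcc, hxA, ?_⟩⟩
    funext k
    by_cases hkx : k = x
    · subst hkx
      rw [if_neg hxA, if_pos rfl, zero_add]
      exact hresid
    · rw [if_neg hkx, add_zero]
      by_cases hkA : k ∈ A
      · rw [if_pos hkA]; exact (Finset.mem_filter.mp hkA).2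
      · rw [if_neg hkA]
        by_cases hk : k ∈ Finset.Icc (0:ℤ) m
        · rcases hall k hk hkx with h | h
          · exact h
          · exact absurd (Finset.mem_filter.mpr ⟨hk, h⟩) hkA
        · exact hz k hk

lemma slab_subset_hull (m : ℕ) (Cv : ℝ) (h1 : 1 < Cv) :
    slab m Cv ⊆ convexHull ℝ (extSet m Cv) := by
  classical
  have hCv0 : (0:ℝ) < Cv := lt_trans one_pos h1
  suffices H : ∀ N : ℕ, ∀ f ∈ slab m Cv,
      ((Finset.Icc (0:ℤ) m).filter (fun k => f k ≠ 0 ∧ f k ≠ 1/Cv)).card ≤ N →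
      f ∈ convexHull ℝ (extSet m Cv) by
    intro f hf
    exact H _ f hf le_rfl
  intro N
  induction N with
  | zero =>
    intro f hf hcard
    exact subset_convexHull ℝ _ (small_case m Cv h1 f hf (le_trans hcard (Nat.zero_le 1)))
  | succ N ih =>
    intro f hf hcard
    by_cases hpair : ∃ j ∈ (Finset.Icc (0:ℤ) m).filter (fun k => f k ≠ 0 ∧ f k ≠ 1/Cv),
        ∃ l ∈ (Finset.Icc (0:ℤ) m).filter (fun k => f k ≠ 0 ∧ f k ≠ 1/Cv), j ≠ l
    · obtain ⟨j, hjI, l, hlI, hjl⟩ := hpair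
      obtain ⟨h0, hz, hc, hs⟩ := hf
      obtain ⟨hjIcc, hj0, hjc⟩ := Finset.mem_filter.mp hjI
      obtain ⟨hlIcc, hl0, hlc⟩ := Finset.mem_filter.mp hlI
      have hfj0 : 0 < f j := (h0 j).lt_of_ne (Ne.symm hj0)
      have hfjc : f j < 1/Cv := (hc j).lt_of_ne hjc
      have hfl0 : 0 < f l := (h0 l).lt_of_ne (Ne.symm hl0)
      have hflc : f l < 1/Cv := (hc l).lt_of_ne hlc
      set ε₁ := min (1/Cv - f j) (f l) with hε₁def
      set ε₂ := min (f j) (1/Cv - f l) with hε₂def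
      have hε₁ : 0 < ε₁ := lt_min (by linarith) hfl0
      have hε₂ : 0 < ε₂ := lt_min hfj0 (by linarith)
      have hε₁a : ε₁ ≤ 1/Cv - f j := min_le_left _ _
      have hε₁b : ε₁ ≤ f l := min_le_right _ _
      have hε₂a : ε₂ ≤ f j := min_le_left _ _
      have hε₂b : ε₂ ≤ 1/Cv - f l := min_le_right _ _
      set g₁ : ℤ → ℝ := fun k => if k = j then f j + ε₁ else if k = l then f l - ε₁ else f k
        with hg₁def
      set g₂ : ℤ → ℝ := fun k => if k = j then f j - ε₂ else if k = l then f l + ε₂ else f k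
        with hg₂def
      have hsumform : ∀ (g : ℤ → ℝ) (ε : ℝ),
          (∀ k ∈ Finset.Icc (0:ℤ) m,
            g k = f k + ((if k = j then ε else 0) - (if k = l then ε else 0))) →
          ∑ k ∈ Finset.Icc (0:ℤ) m, g k = 1 := by
        intro g ε hptw
        rw [Finset.sum_congr rfl hptw, Finset.sum_add_distrib, hs, Finset.sum_sub_distrib,
          Finset.sum_ite_eq' (Finset.Icc (0:ℤ) m) j, Finset.sum_ite_eq' (Finset.Icc (0:ℤ) m) l,
          if_pos hjIcc, if_pos hlIcc]
        ring
      have hg₁slab : g₁ ∈ slab m Cv := by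
        refine ⟨?_, ?_, ?_, ?_⟩
        · intro k
          simp only [hg₁def]
          split
          · linarith
          · split
            · linarith
            · exact h0 k
        · intro k hk
          have hkj : k ≠ j := fun h => hk (h ▸ hjIcc)
          have hkl : k ≠ l := fun h => hk (h ▸ hlIcc)
          simp only [hg₁def, if_neg hkj, if_neg hkl]
          exact hz k hk
        · intro k
          simp only [hg₁def]
          split
          · linarith
          · split
            · linarith
            · exact hc k
        · apply hsumform g₁ ε₁
          intro k _
          simp only [hg₁def]
          by_cases hkj : k = j
          · subst hkj
            rw [if_pos rfl, if_pos rfl, if_neg hjl]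
            ring
          · rw [if_neg hkj, if_neg hkj]
            by_cases hkl : k = l
            · subst hkl
              rw [if_pos rfl, if_pos rfl]
              ring
            · rw [if_neg hkl, if_neg hkl]
              ring
      have hg₂slab : g₂ ∈ slab m Cv := by
        refine ⟨?_, ?_, ?_, ?_⟩
        · intro k
          simp only [hg₂def]
          split
          · linarith
          · split
            · linarith
            · exact h0 k
        · intro k hk
          have hkj : k ≠ j := fun h => hk (h ▸ hjIcc)
          have hkl : k ≠ l := fun h => hk (h ▸ hlIcc)
          simp only [hg₂def, if_neg hkj, if_neg hkl]
          exact hz k hk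
        · intro k
          simp only [hg₂def]
          split
          · linarith
          · split
            · linarith
            · exact hc k
        · apply hsumform g₂ (-ε₂)
          intro k _
          simp only [hg₂def]
          by_cases hkj : k = j
          · subst hkj
            rw [if_pos rfl, if_pos rfl, if_neg hjl]
            ring
          · rw [if_neg hkj, if_neg hkj]
            by_cases hkl : k = l
            · subst hkl
              rw [if_pos rfl, if_pos rfl]
              ring
            · rw [if_neg hkl, if_neg hkl]
              ring
      -- cardinality decrease
      have hsub : ∀ (g : ℤ → ℝ), (∀ k, k ≠ j → k ≠ l → g k = f k) →
          (Finset.Icc (0:ℤ) m).filter (fun k => g k ≠ 0 ∧ g k ≠ 1/Cv) ⊆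
          (Finset.Icc (0:ℤ) m).filter (fun k => f k ≠ 0 ∧ f k ≠ 1/Cv) := by
        intro g hg k hk
        obtain ⟨hk1, hk2⟩ := Finset.mem_filter.mp hk
        by_cases hkj : k = j
        · subst hkj; exact hjI
        · by_cases hkl : k = l
          · subst hkl; exact hlI
          · rw [hg k hkj hkl] at hk2
            exact Finset.mem_filter.mpr ⟨hk1, hk2⟩
      have hcard_of_wit : ∀ (g : ℤ → ℝ), (∀ k, k ≠ j → k ≠ l → g k = f k) →
          (∃ w, w ∈ (Finset.Icc (0:ℤ) m).filter (fun k => f k ≠ 0 ∧ f k ≠ 1/Cv) ∧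
            w ∉ (Finset.Icc (0:ℤ) m).filter (fun k => g k ≠ 0 ∧ g k ≠ 1/Cv)) →
          ((Finset.Icc (0:ℤ) m).filter (fun k => g k ≠ 0 ∧ g k ≠ 1/Cv)).card ≤ N := by
        intro g hg ⟨w, hw1, hw2⟩
        have hlt := Finset.card_lt_card ((Finset.ssubset_iff_of_subset (hsub g hg)).mpr
          ⟨w, hw1, hw2⟩)
        omega
      have hcard₁ : ((Finset.Icc (0:ℤ) m).filter (fun k => g₁ k ≠ 0 ∧ g₁ k ≠ 1/Cv)).card ≤ N := by
        apply hcard_of_wit g₁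
        · intro k hkj hkl; simp only [hg₁def, if_neg hkj, if_neg hkl]
        · by_cases hm : 1/Cv - f j ≤ f l
          · refine ⟨j, hjI, fun h => ?_⟩
            have : g₁ j = 1/Cv := by
              show (if j = j then f j + ε₁ else if j = l then f l - ε₁ else f j) = 1/Cv
              rw [if_pos rfl, hε₁def, min_eq_left hm]; ring
            exact (Finset.mem_filter.mp h).2.2 this
          · refine ⟨l, hlI, fun h => ?_⟩
            have : g₁ l = 0 := by
              show (if l = j then f j + ε₁ else if l = l then f l - ε₁ else f l) = 0
              rw [if_neg (Ne.symm hjl), if_pos rfl, hε₁def,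
                min_eq_right (le_of_not_ge hm)]; ring
            exact (Finset.mem_filter.mp h).2.1 this
      have hcard₂ : ((Finset.Icc (0:ℤ) m).filter (fun k => g₂ k ≠ 0 ∧ g₂ k ≠ 1/Cv)).card ≤ N := by
        apply hcard_of_wit g₂
        · intro k hkj hkl; simp only [hg₂def, if_neg hkj, if_neg hkl]
        · by_cases hm : f j ≤ 1/Cv - f l
          · refine ⟨j, hjI, fun h => ?_⟩
            have : g₂ j = 0 := by
              show (if j = j then f j - ε₂ else if j = l then f l + ε₂ else f j) = 0
              rw [if_pos rfl, hε₂def, min_eq_left hm]; ring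
            exact (Finset.mem_filter.mp h).2.1 this
          · refine ⟨l, hlI, fun h => ?_⟩
            have : g₂ l = 1/Cv := by
              show (if l = j then f j - ε₂ else if l = l then f l + ε₂ else f l) = 1/Cv
              rw [if_neg (Ne.symm hjl), if_pos rfl, hε₂def,
                min_eq_right (le_of_not_ge hm)]; ring
            exact (Finset.mem_filter.mp h).2.2 this
      have hmem₁ := ih g₁ hg₁slab hcard₁
      have hmem₂ := ih g₂ hg₂slab hcard₂
      set θ := ε₂ / (ε₁ + ε₂) with hθdef
      have hsumε : 0 < ε₁ + ε₂ := by linarith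
      have hθ0 : 0 ≤ θ := by positivity
      have hθ1 : θ ≤ 1 := by
        rw [hθdef, div_le_one hsumε]; linarith
      have key := (convex_convexHull ℝ (extSet m Cv)) hmem₁ hmem₂ hθ0
        (by linarith : (0:ℝ) ≤ 1 - θ) (by ring)
      have hfeq : f = θ • g₁ + (1 - θ) • g₂ := by
        have hθε : θ * ε₁ = (1 - θ) * ε₂ := by
          rw [hθdef]
          field_simp
          ring
        funext k
        simp only [Pi.add_apply, Pi.smul_apply, smul_eq_mul]
        by_cases hkj : k = j
        · simp only [hg₁def, hg₂def, if_pos hkj]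
          rw [hkj]
          have : θ * (f j + ε₁) + (1 - θ) * (f j - ε₂)
              = f j + (θ * ε₁ - (1 - θ) * ε₂) := by ring
          rw [this, hθε]
          ring
        · by_cases hkl : k = l
          · simp only [hg₁def, hg₂def, if_neg hkj, if_pos hkl]
            rw [hkl]
            have : θ * (f l - ε₁) + (1 - θ) * (f l + ε₂)
                = f l - (θ * ε₁ - (1 - θ) * ε₂) := by ring
            rw [this, hθε]
            ring
          · simp only [hg₁def, hg₂def, if_neg hkj, if_neg hkl]
            ring
      rw [hfeq]
      exact key
    · push_neg at hpair
      have : ((Finset.Icc (0:ℤ) m).filter (fun k => f k ≠ 0 ∧ f k ≠ 1/Cv)).card ≤ 1 :=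
        Finset.card_le_one.mpr (fun a ha b hb => hpair a ha b hb)
      exact subset_convexHull ℝ _ (small_case m Cv h1 f hf this)

open scoped Classical in
/-- The coefficient `P(∑ = s)` of the convolution of the pmfs `q i`. -/
noncomputable def Lsum (n m : ℕ) (s : ℤ) (q : Fin n → ℤ → ℝ) : ℝ :=
  ∑ k ∈ (Fintype.piFinset (fun _ : Fin n => Finset.Icc (0:ℤ) m)).filter
      (fun k => ∑ i, k i = s), ∏ i, q i (k i)

/-- `∑_s P(∑ = s)^α`. -/
noncomputable def Gfun (n m : ℕ) (α : ℝ) (q : Fin n → ℤ → ℝ) : ℝ :=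
  ∑ s ∈ Finset.Icc (0:ℤ) (n * m), (Lsum n m s q) ^ α

lemma sum_mem_Icc_of_piFinset {n m : ℕ} {k : Fin n → ℤ}
    (hk : k ∈ Fintype.piFinset (fun _ : Fin n => Finset.Icc (0:ℤ) m)) :
    ∑ i, k i ∈ Finset.Icc (0:ℤ) (n * m) := by
  rw [Fintype.mem_piFinset] at hk
  rw [Finset.mem_Icc]
  constructor
  · exact Finset.sum_nonneg fun i _ => (Finset.mem_Icc.mp (hk i)).1
  · calc ∑ i, k i ≤ ∑ _i : Fin n, (m : ℤ) :=
          Finset.sum_le_sum fun i _ => (Finset.mem_Icc.mp (hk i)).2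
      _ = n * m := by simp [Finset.sum_const, mul_comm]

lemma Lsum_eq_zero {n m : ℕ} {s : ℤ} (hs : s ∉ Finset.Icc (0:ℤ) (n * m))
    (q : Fin n → ℤ → ℝ) : Lsum n m s q = 0 := by
  classical
  rw [Lsum]
  convert Finset.sum_empty
  rw [Finset.filter_eq_empty_iff]
  intro k hk hks
  exact hs (hks ▸ sum_mem_Icc_of_piFinset hk)

lemma Lsum_nonneg {n m : ℕ} {s : ℤ} {q : Fin n → ℤ → ℝ}
    (hq : ∀ i k, 0 ≤ q i k) : 0 ≤ Lsum n m s q :=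
  Finset.sum_nonneg fun k _ => Finset.prod_nonneg fun i _ => hq i (k i)

lemma Lsum_total {n m : ℕ} (C : Fin n → ℝ) {q : Fin n → ℤ → ℝ}
    (hq : ∀ i, q i ∈ slab m (C i)) :
    ∑ s ∈ Finset.Icc (0:ℤ) (n * m), Lsum n m s q = 1 := by
  classical
  simp only [Lsum]
  rw [Finset.sum_fiberwise_of_maps_to (fun k hk => sum_mem_Icc_of_piFinset hk)]
  rw [← Finset.prod_univ_sum]
  rw [Finset.prod_congr rfl fun i _ => (hq i).2.2.2]
  exact Finset.prod_const_one

lemma convexOn_finset_sum {ι : Type*} (t : Finset ι) {s : Set (ℤ → ℝ)} (hs : Convex ℝ s)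
    {f : ι → (ℤ → ℝ) → ℝ} (hf : ∀ i ∈ t, ConvexOn ℝ s (f i)) :
    ConvexOn ℝ s (fun x => ∑ i ∈ t, f i x) := by
  classical
  induction t using Finset.induction_on with
  | empty => simpa using convexOn_const (0:ℝ) hs
  | insert a t' ha ih =>
    simp only [Finset.sum_insert ha]
    exact (hf a (Finset.mem_insert_self a t')).add
      (ih fun i hi => hf i (Finset.mem_insert_of_mem hi))

open scoped Classical in
/-- `Lsum` as a linear map in the `i`-th coordinate. -/
noncomputable def LsumLin (n m : ℕ) (s : ℤ) (q : Fin n → ℤ → ℝ) (i : Fin n) :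
    (ℤ → ℝ) →ₗ[ℝ] ℝ where
  toFun r := ∑ k ∈ (Fintype.piFinset (fun _ : Fin n => Finset.Icc (0:ℤ) m)).filter
      (fun k => ∑ i, k i = s), r (k i) * ∏ j ∈ Finset.univ.erase i, q j (k j)
  map_add' r₁ r₂ := by
    rw [← Finset.sum_add_distrib]
    exact Finset.sum_congr rfl fun k _ => by simp [add_mul]
  map_smul' c r := by
    simp only [RingHom.id_apply, Finset.smul_sum]
    exact Finset.sum_congr rfl fun k _ => by simp [smul_eq_mul]; ring

open scoped Classical in
lemma Lsum_update {n m : ℕ} (s : ℤ) (q : Fin n → ℤ → ℝ) (i : Fin n) (r : ℤ → ℝ) :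
    Lsum n m s (Function.update q i r) = LsumLin n m s q i r := by
  rw [Lsum, LsumLin]
  simp only [LinearMap.coe_mk, AddHom.coe_mk]
  apply Finset.sum_congr rfl
  intro k _
  rw [← Finset.mul_prod_erase Finset.univ _ (Finset.mem_univ i), Function.update_self]
  congr 1
  apply Finset.prod_congr rfl
  intro j hj
  rw [Function.update_of_ne (Finset.ne_of_mem_erase hj)]

lemma gfun_update_convexOn {n m : ℕ} {α : ℝ} (hα : 1 ≤ α) (Cv : ℝ)
    (q : Fin n → ℤ → ℝ) (hq : ∀ j k, 0 ≤ q j k) (i : Fin n) :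
    ConvexOn ℝ (slab m Cv) (fun r => Gfun n m α (Function.update q i r)) := by
  classical
  have : ∀ r, Gfun n m α (Function.update q i r)
      = ∑ s ∈ Finset.Icc (0:ℤ) (n * m), (LsumLin n m s q i r) ^ α := by
    intro r
    rw [Gfun]
    exact Finset.sum_congr rfl fun s _ => by rw [Lsum_update]
  simp only [this]
  apply convexOn_finset_sum _ (slab_convex m Cv)
  intro s _
  have base : ConvexOn ℝ (Set.Ici (0:ℝ)) (fun x : ℝ => x ^ α) := convexOn_rpow hα
  have comp := base.comp_linearMap (LsumLin n m s q i)
  apply comp.subset ?_ (slab_convex m Cv)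
  intro r hr
  simp only [Set.mem_preimage, Set.mem_Ici]
  show (0:ℝ) ≤ LsumLin n m s q i r
  apply Finset.sum_nonneg
  intro k _
  exact mul_nonneg (hr.1 (k i)) (Finset.prod_nonneg fun j _ => hq j (k j))

lemma exists_ext_tuple {n m : ℕ} {α : ℝ} (hα : 1 ≤ α) (C : Fin n → ℝ)
    (hC1 : ∀ i, 1 < C i) (p : Fin n → ℤ → ℝ) (hp : ∀ i, p i ∈ slab m (C i)) :
    ∃ e : Fin n → ℤ → ℝ, (∀ i, e i ∈ extSet m (C i)) ∧ Gfun n m α p ≤ Gfun n m α e := by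
  classical
  suffices H : ∀ t : Finset (Fin n), ∃ e : Fin n → ℤ → ℝ,
      (∀ i ∈ t, e i ∈ extSet m (C i)) ∧ (∀ i, e i ∈ slab m (C i)) ∧
      Gfun n m α p ≤ Gfun n m α e by
    obtain ⟨e, h1, _, h3⟩ := H Finset.univ
    exact ⟨e, fun i => h1 i (Finset.mem_univ i), h3⟩
  intro t
  induction t using Finset.induction_on with
  | empty => exact ⟨p, by simp, hp, le_rfl⟩
  | insert a t' ha ih =>
    obtain ⟨e, he1, he2, he3⟩ := ih
    have hq0 : ∀ j k, 0 ≤ e j k := fun j k => (he2 j).1 k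
    have hconv := gfun_update_convexOn (n := n) (m := m) hα (C a) e hq0 a
    have hmem : e a ∈ convexHull ℝ (extSet m (C a)) :=
      slab_subset_hull m (C a) (hC1 a) (he2 a)
    obtain ⟨r, hrext, hler⟩ := hconv.exists_ge_of_mem_convexHull
      (extSet_subset_slab m (C a) (hC1 a)) hmem
    rw [Function.update_eq_self] at hler
    refine ⟨Function.update e a r, ?_, ?_, he3.trans hler⟩
    · intro i hi
      rcases Finset.mem_insert.mp hi with h | h
      · subst h; rw [Function.update_self]; exact hrext
      · rw [Function.update_of_ne (show i ≠ a from fun hia => ha (hia ▸ h))]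
        exact he1 i h
    · intro i
      by_cases hia : i = a
      · subst hia; rw [Function.update_self]
        exact extSet_subset_slab m (C i) (hC1 i) hrext
      · rw [Function.update_of_ne hia]; exact he2 i

lemma Gfun_pos {n m : ℕ} {α : ℝ} (hα : 0 < α) (C : Fin n → ℝ) {p : Fin n → ℤ → ℝ}
    (hp : ∀ i, p i ∈ slab m (C i)) : 0 < Gfun n m α p := by
  have htot := Lsum_total C hp
  have hnn : ∀ i k, 0 ≤ p i k := fun i k => (hp i).1 k
  obtain ⟨s, hs, hspos⟩ : ∃ s ∈ Finset.Icc (0:ℤ) (n * m), 0 < Lsum n m s p := by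
    by_contra h
    push_neg at h
    have : ∑ s ∈ Finset.Icc (0:ℤ) (n * m), Lsum n m s p ≤ 0 :=
      Finset.sum_nonpos fun s hs => h s hs
    linarith
  calc (0:ℝ) < (Lsum n m s p) ^ α := Real.rpow_pos_of_pos hspos α
    _ ≤ Gfun n m α p := by
        rw [Gfun]
        exact Finset.single_le_sum
          (f := fun s => Lsum n m s p ^ α)
          (fun j _ => Real.rpow_nonneg (Lsum_nonneg hnn) α) hs

/-! ### Measures from pmfs -/

noncomputable def pmfMeasure (m : ℕ) (q : ℤ → ℝ) : MeasureTheory.Measure ℤ :=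
  ∑ k ∈ Finset.Icc (0:ℤ) m, (ENNReal.ofReal (q k)) • MeasureTheory.Measure.dirac k

open MeasureTheory in
lemma pmfMeasure_singleton {m : ℕ} {Cv : ℝ} {q : ℤ → ℝ} (hq : q ∈ slab m Cv) (j : ℤ) :
    pmfMeasure m q {j} = ENNReal.ofReal (q j) := by
  classical
  rw [pmfMeasure, Measure.finset_sum_apply]
  have h : ∀ k ∈ Finset.Icc (0:ℤ) m,
      ((ENNReal.ofReal (q k)) • Measure.dirac k) {j}
        = if k = j then ENNReal.ofReal (q j) else 0 := by
    intro k _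
    rw [Measure.smul_apply, smul_eq_mul, Measure.dirac_apply, Set.indicator_apply]
    simp only [Set.mem_singleton_iff, Pi.one_apply]
    split_ifs with hkj
    · rw [mul_one, hkj]
    · rw [mul_zero]
  rw [Finset.sum_congr rfl h, Finset.sum_ite_eq' (Finset.Icc (0:ℤ) m) j]
  split_ifs with hj
  · rfl
  · rw [hq.2.1 j hj, ENNReal.ofReal_zero]

open MeasureTheory in
lemma pmfMeasure_isProb {m : ℕ} {Cv : ℝ} {q : ℤ → ℝ} (hq : q ∈ slab m Cv) :
    IsProbabilityMeasure (pmfMeasure m q) := by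
  constructor
  rw [pmfMeasure, Measure.finset_sum_apply]
  have h : ∀ k ∈ Finset.Icc (0:ℤ) m,
      ((ENNReal.ofReal (q k)) • Measure.dirac k) Set.univ = ENNReal.ofReal (q k) := by
    intro k _
    rw [Measure.smul_apply, smul_eq_mul, measure_univ, mul_one]
  rw [Finset.sum_congr rfl h, ← ENNReal.ofReal_sum_of_nonneg (fun k _ => hq.1 k),
    hq.2.2.2, ENNReal.ofReal_one]

open MeasureTheory in
lemma pmfMeasure_compl {m : ℕ} {Cv : ℝ} {q : ℤ → ℝ} (hq : q ∈ slab m Cv) :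
    pmfMeasure m q ((↑(Finset.Icc (0:ℤ) m) : Set ℤ)ᶜ) = 0 := by
  rw [pmfMeasure, Measure.finset_sum_apply]
  apply Finset.sum_eq_zero
  intro k hk
  rw [Measure.smul_apply, smul_eq_mul, Measure.dirac_apply, Set.indicator_apply]
  have : k ∉ ((↑(Finset.Icc (0:ℤ) m) : Set ℤ)ᶜ) := by
    simp only [Set.mem_compl_iff, Finset.coe_sort_coe, Finset.mem_coe, not_not]
    exact hk
  rw [if_neg this, mul_zero]

open MeasureTheory in
lemma pi_cyl {n : ℕ} (ν : Fin n → Measure ℤ) [∀ i, IsProbabilityMeasure (ν i)]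
    (i : Fin n) (s : Set ℤ) :
    Measure.pi ν ((fun z : Fin n → ℤ => z i) ⁻¹' s) = ν i s := by
  classical
  have hset : ((fun z : Fin n → ℤ => z i) ⁻¹' s)
      = Set.pi Set.univ (fun j => if j = i then s else Set.univ) := by
    ext z
    simp only [Set.mem_preimage, Set.mem_pi, Set.mem_univ, true_implies]
    constructor
    · intro hz j
      split_ifs with hj
      · subst hj; exact hz
      · trivial
    · intro hz
      have := hz i
      rwa [if_pos rfl] at this
  rw [hset, Measure.pi_pi]
  rw [Finset.prod_eq_single i (fun j _ hj => by rw [if_neg hj, measure_univ])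
    (fun h => absurd (Finset.mem_univ i) h)]
  rw [if_pos rfl]

open MeasureTheory ProbabilityTheory in
lemma pi_iIndep {n : ℕ} (ν : Fin n → Measure ℤ) [∀ i, IsProbabilityMeasure (ν i)] :
    iIndepFun (fun i (z : Fin n → ℤ) => z i) (Measure.pi ν) := by
  classical
  rw [iIndepFun_iff_measure_inter_preimage_eq_mul]
  intro S sets _
  have hset : (⋂ i ∈ S, (fun z : Fin n → ℤ => z i) ⁻¹' sets i)
      = Set.pi Set.univ (fun j => if j ∈ S then sets j else Set.univ) := by
    ext z
    simp only [Set.mem_iInter, Set.mem_preimage, Set.mem_pi, Set.mem_univ, true_implies]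
    constructor
    · intro hz j
      split_ifs with hj
      · exact hz j hj
      · trivial
    · intro hz j hj
      have := hz j
      rwa [if_pos hj] at this
  rw [hset, Measure.pi_pi]
  calc ∏ j, ν j (if j ∈ S then sets j else Set.univ)
      = ∏ j, (if j ∈ S then ν j (sets j) else 1) := by
        apply Finset.prod_congr rfl
        intro j _
        split_ifs
        · rfl
        · exact measure_univ
    _ = ∏ j ∈ Finset.univ ∩ S, ν j (sets j) := Finset.prod_ite_mem _ _ _
    _ = ∏ j ∈ S, ν j (sets j) := by rw [Finset.univ_inter]
    _ = ∏ j ∈ S, Measure.pi ν ((fun z : Fin n → ℤ => z j) ⁻¹' sets j) := by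
        exact Finset.prod_congr rfl fun j _ => (pi_cyl ν j (sets j)).symm

open MeasureTheory in
lemma pi_singleton_apply {n m : ℕ} (C : Fin n → ℝ) (e : Fin n → ℤ → ℝ)
    (he : ∀ i, e i ∈ slab m (C i)) (k : Fin n → ℤ) :
    Measure.pi (fun i => pmfMeasure m (e i)) {k} = ∏ i, ENNReal.ofReal (e i (k i)) := by
  haveI : ∀ i, IsProbabilityMeasure (pmfMeasure m (e i)) := fun i => pmfMeasure_isProb (he i)
  have hset : ({k} : Set (Fin n → ℤ)) = Set.pi Set.univ (fun i => {k i}) := by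
    ext z
    simp [Set.mem_pi, funext_iff]
  rw [hset, Measure.pi_pi]
  exact Finset.prod_congr rfl fun i _ => pmfMeasure_singleton (he i) (k i)

open MeasureTheory in
lemma pi_sum_apply {n m : ℕ} (C : Fin n → ℝ) (e : Fin n → ℤ → ℝ)
    (he : ∀ i, e i ∈ slab m (C i)) (s : ℤ) :
    (Measure.pi (fun i => pmfMeasure m (e i)) {z : Fin n → ℤ | ∑ i, z i = s}).toReal
      = Lsum n m s e := by
  classical
  haveI : ∀ i, IsProbabilityMeasure (pmfMeasure m (e i)) := fun i => pmfMeasure_isProb (he i)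
  set μ := Measure.pi (fun i => pmfMeasure m (e i)) with hμdef
  set Tset : Set (Fin n → ℤ) := {z | ∀ i, z i ∈ Finset.Icc (0:ℤ) m} with hTdef
  have hTnull : μ Tsetᶜ = 0 := by
    have hsub : Tsetᶜ = ⋃ i, ((fun z : Fin n → ℤ => z i) ⁻¹'
        ((↑(Finset.Icc (0:ℤ) m) : Set ℤ)ᶜ)) := by
      ext z
      simp [hTdef, not_forall]
    rw [hsub]
    apply measure_iUnion_null
    intro i
    rw [hμdef, pi_cyl]
    exact pmfMeasure_compl (he i)
  have h1 : μ {z : Fin n → ℤ | ∑ i, z i = s} = μ ({z : Fin n → ℤ | ∑ i, z i = s} ∩ Tset) :=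
    (measure_inter_conull hTnull).symm
  set Ts := (Fintype.piFinset (fun _ : Fin n => Finset.Icc (0:ℤ) m)).filter
      (fun k => ∑ i, k i = s) with hTsdef
  have h2 : {z : Fin n → ℤ | ∑ i, z i = s} ∩ Tset = ⋃ k ∈ Ts, ({k} : Set (Fin n → ℤ)) := by
    ext z
    simp only [Set.mem_inter_iff, Set.mem_setOf_eq, hTdef, Set.mem_iUnion,
      Set.mem_singleton_iff, hTsdef, Finset.mem_filter, Fintype.mem_piFinset]
    constructor
    · rintro ⟨hzs, hzT⟩
      exact ⟨z, ⟨hzT, hzs⟩, rfl⟩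
    · rintro ⟨k, ⟨hkT, hks⟩, rfl⟩
      exact ⟨hks, hkT⟩
  have hdisj : (↑Ts : Set (Fin n → ℤ)).PairwiseDisjoint
      (fun k => ({k} : Set (Fin n → ℤ))) := by
    intro a _ b _ hab
    exact Set.disjoint_singleton.mpr hab
  have hmeas : ∀ k ∈ Ts, MeasurableSet ({k} : Set (Fin n → ℤ)) := by
    intro k _
    have : ({k} : Set (Fin n → ℤ)) = ⋂ i, ((fun z : Fin n → ℤ => z i) ⁻¹' {k i}) := by
      ext z
      simp [funext_iff]
    rw [this]
    exact MeasurableSet.iInter fun i => (measurable_pi_apply i) (measurableSet_singleton _)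
  rw [h1, h2, measure_biUnion_finset hdisj hmeas]
  rw [Finset.sum_congr rfl fun k _ => pi_singleton_apply C e he k]
  rw [ENNReal.toReal_sum (fun k _ => ENNReal.prod_ne_top (fun i _ => ENNReal.ofReal_ne_top))]
  rw [Lsum]
  apply Finset.sum_congr rfl
  intro k _
  rw [ENNReal.toReal_prod]
  exact Finset.prod_congr rfl fun i _ => ENNReal.toReal_ofReal ((he i).1 (k i))

open MeasureTheory ProbabilityTheory in
lemma X_pmf_mem_slab {Ω : Type*} [MeasureSpace Ω] [IsProbabilityMeasure (ℙ : Measure Ω)]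
    (m : ℕ) (Cv : ℝ) (Y : Ω → ℤ) (hYm : Measurable Y)
    (hYrange : ∀ ω, Y ω ∈ Finset.Icc (0:ℤ) m)
    (hb : ∀ k : ℤ, (ℙ {ω | Y ω = k}).toReal ≤ 1 / Cv) :
    (fun k => (ℙ {ω | Y ω = k}).toReal) ∈ slab m Cv := by
  classical
  refine ⟨fun k => ENNReal.toReal_nonneg, ?_, hb, ?_⟩
  · intro k hk
    have : {ω | Y ω = k} = ∅ := by
      ext ω
      simp only [Set.mem_setOf_eq, Set.mem_empty_iff_false, iff_false]
      intro h
      exact hk (h ▸ hYrange ω)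
    show (ℙ {ω | Y ω = k}).toReal = 0
    rw [this]
    simp
  · have hcover : (Set.univ : Set Ω) = ⋃ k ∈ Finset.Icc (0:ℤ) m, {ω | Y ω = k} := by
      ext ω
      simp only [Set.mem_univ, true_iff, Set.mem_iUnion, Set.mem_setOf_eq]
      exact ⟨Y ω, hYrange ω, rfl⟩
    have hdisj : (↑(Finset.Icc (0:ℤ) m) : Set ℤ).PairwiseDisjoint
        (fun k => {ω | Y ω = k}) := by
      intro a _ b _ hab
      simp only [Function.onFun]
      rw [Set.disjoint_left]
      intro ω ha hb'
      have h1 : Y ω = a := ha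
      have h2 : Y ω = b := hb'
      exact hab (h1.symm.trans h2)
    have hmeas : ∀ k ∈ Finset.Icc (0:ℤ) m, MeasurableSet {ω | Y ω = k} :=
      fun k _ => hYm (measurableSet_singleton k)
    have h1 : (1 : ENNReal) = ∑ k ∈ Finset.Icc (0:ℤ) m, ℙ {ω | Y ω = k} := by
      rw [← measure_biUnion_finset hdisj hmeas, ← hcover, measure_univ]
    have := congrArg ENNReal.toReal h1
    rw [ENNReal.toReal_one, ENNReal.toReal_sum (fun k _ => measure_ne_top _ _)] at this
    exact this.symm

open MeasureTheory ProbabilityTheory in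
lemma X_sum_eq_Lsum {Ω : Type*} [MeasureSpace Ω] [IsProbabilityMeasure (ℙ : Measure Ω)]
    (m n : ℕ) (X : Fin n → Ω → ℤ) (hXm : ∀ i, Measurable (X i))
    (hXrange : ∀ i ω, X i ω ∈ Finset.Icc (0:ℤ) m)
    (hindep : iIndepFun X ℙ) (s : ℤ) :
    (ℙ {ω | ∑ i, X i ω = s}).toReal
      = Lsum n m s (fun i k => (ℙ {ω | X i ω = k}).toReal) := by
  classical
  set Ts := (Fintype.piFinset (fun _ : Fin n => Finset.Icc (0:ℤ) m)).filter
      (fun k => ∑ i, k i = s) with hTsdef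
  have hcover : {ω | ∑ i, X i ω = s} = ⋃ k ∈ Ts, (⋂ i, X i ⁻¹' {k i}) := by
    ext ω
    simp only [Set.mem_setOf_eq, Set.mem_iUnion, Set.mem_iInter, Set.mem_preimage,
      Set.mem_singleton_iff, hTsdef, Finset.mem_filter, Fintype.mem_piFinset]
    constructor
    · intro hs
      exact ⟨fun i => X i ω, ⟨fun i => hXrange i ω, hs⟩, fun i => rfl⟩
    · rintro ⟨k, ⟨_, hks⟩, hk⟩
      rw [← hks]
      exact Finset.sum_congr rfl fun i _ => hk i
  have hdisj : (↑Ts : Set (Fin n → ℤ)).PairwiseDisjoint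
      (fun k => ⋂ i, X i ⁻¹' {(k : Fin n → ℤ) i}) := by
    intro a _ b _ hab
    simp only [Function.onFun]
    rw [Set.disjoint_left]
    intro ω ha hb
    apply hab
    funext i
    have h1 := Set.mem_iInter.mp ha i
    have h2 := Set.mem_iInter.mp hb i
    simp only [Set.mem_preimage, Set.mem_singleton_iff] at h1 h2
    rw [← h1, ← h2]
  have hmeas : ∀ k ∈ Ts, MeasurableSet (⋂ i, X i ⁻¹' {(k : Fin n → ℤ) i}) :=
    fun k _ => MeasurableSet.iInter fun i => (hXm i) (measurableSet_singleton _)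
  have hprod : ∀ k : Fin n → ℤ, ℙ (⋂ i, X i ⁻¹' {k i}) = ∏ i, ℙ (X i ⁻¹' {k i}) := by
    intro k
    have hiff := (ProbabilityTheory.iIndepFun_iff_measure_inter_preimage_eq_mul.mp hindep)
      Finset.univ (sets := fun i => ({k i} : Set ℤ)) (fun i _ => measurableSet_singleton _)
    rw [show (⋂ i, X i ⁻¹' {k i}) = ⋂ i ∈ Finset.univ, X i ⁻¹' {k i} by simp]
    rw [hiff]
  rw [hcover, measure_biUnion_finset hdisj hmeas]
  rw [Finset.sum_congr rfl fun k _ => hprod k]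
  rw [ENNReal.toReal_sum (fun k _ => ENNReal.prod_ne_top (fun i _ => measure_ne_top _ _))]
  rw [Lsum]
  apply Finset.sum_congr rfl
  intro k _
  rw [ENNReal.toReal_prod]
  rfl

open MeasureTheory in
lemma renyi_eq_Gfun {Ω' : Type*} [MeasurableSpace Ω'] (μ : Measure Ω') (n m : ℕ) (α : ℝ)
    (hα : 0 < α) (F : Ω' → ℤ) (q : Fin n → ℤ → ℝ)
    (h : ∀ s : ℤ, (μ {ω | F ω = s}).toReal = Lsum n m s q) :
    renyiEntropyM μ α F = (1 - α)⁻¹ * Real.log (Gfun n m α q) := by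
  rw [renyiEntropyM]
  have hfun : ∀ s : ℤ, (μ {ω | F ω = s}).toReal ^ α = (Lsum n m s q) ^ α :=
    fun s => by rw [h s]
  rw [tsum_congr hfun, tsum_eq_sum (s := Finset.Icc (0:ℤ) (n*m))
    (fun b hb => by rw [Lsum_eq_zero hb, Real.zero_rpow (ne_of_gt hα)]), Gfun]


/-- **reduction to extreme points.**
Let `α ∈ (1,∞)`, `1 < C_i ≤ m+1`, and let `X_1, …, X_n` be mutually independent
random variables with values in `{0,…,m}` such that `P(X_i = k) ≤ 1/C_i` for all `k`.
Then there exist mutually independent random variables `Z_1, …, Z_n` with values in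
`{0,…,m}` (realized here as the coordinates of some probability measure on
`Fin n → ℤ`) whose probability mass functions are extreme points
`f_{Z_i} = (1/C_i)·1_A + (1 − ⌊C_i⌋/C_i)·1_{{x}}` (with `|A| = ⌊C_i⌋`,
`x ∈ {0,…,m} \ A`, the second term vanishing when `C_i` is an integer), and such
that `H_α(X_1 + ⋯ + X_n) ≥ H_α(Z_1 + ⋯ + Z_n)`. -/
theorem renyiEntropy_extreme_point_reduction
    {Ω : Type*} [MeasureSpace Ω] [IsProbabilityMeasure (ℙ : Measure Ω)]
    (m n : ℕ) (α : ℝ) (hα : 1 < α)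
    (C : Fin n → ℝ) (hC1 : ∀ i, 1 < C i) (hC2 : ∀ i, C i ≤ m + 1)
    (X : Fin n → Ω → ℤ) (hXm : ∀ i, Measurable (X i))
    (hXrange : ∀ i ω, X i ω ∈ Finset.Icc (0:ℤ) m)
    (hindep : iIndepFun X ℙ)
    (hbound : ∀ i, ∀ k : ℤ, (ℙ {ω | X i ω = k}).toReal ≤ 1 / C i) :
    ∃ μ : Measure (Fin n → ℤ), IsProbabilityMeasure μ ∧
      iIndepFun (fun i (z : Fin n → ℤ) => z i) μ ∧
      (∀ i, ∃ A : Finset ℤ, A ⊆ Finset.Icc (0:ℤ) m ∧ (A.card : ℤ) = ⌊C i⌋ ∧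
        (((⌊C i⌋ : ℝ) = C i ∧
            ∀ k : ℤ, (μ {z | z i = k}).toReal = if k ∈ A then 1 / C i else 0) ∨
          (∃ x ∈ Finset.Icc (0:ℤ) m, x ∉ A ∧
            ∀ k : ℤ, (μ {z | z i = k}).toReal =
              (if k ∈ A then 1 / C i else 0) +
                (if k = x then 1 - (⌊C i⌋ : ℝ) / C i else 0)))) ∧
      renyiEntropyM ℙ α (fun ω => ∑ i, X i ω) ≥
        renyiEntropyM μ α (fun z => ∑ i, z i) := by
  classical
  have hα1 : (1:ℝ) ≤ α := le_of_lt hα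
  set p : Fin n → ℤ → ℝ := fun i k => (ℙ {ω | X i ω = k}).toReal with hpdef
  have hp : ∀ i, p i ∈ slab m (C i) := fun i =>
    X_pmf_mem_slab m (C i) (X i) (hXm i) (hXrange i) (hbound i)
  obtain ⟨e, heext, hG⟩ := exists_ext_tuple hα1 C hC1 p hp
  have heslab : ∀ i, e i ∈ slab m (C i) :=
    fun i => extSet_subset_slab m (C i) (hC1 i) (heext i)
  haveI : ∀ i, IsProbabilityMeasure (pmfMeasure m (e i)) :=
    fun i => pmfMeasure_isProb (heslab i)
  refine ⟨Measure.pi (fun i => pmfMeasure m (e i)), inferInstance, pi_iIndep _, ?_, ?_⟩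
  · intro i
    obtain ⟨A, hA, hcard, hbr⟩ := heext i
    have hmarg : ∀ k : ℤ,
        (Measure.pi (fun i => pmfMeasure m (e i)) {z | z i = k}).toReal = e i k := by
      intro k
      have hset : {z : Fin n → ℤ | z i = k} = (fun z : Fin n → ℤ => z i) ⁻¹' {k} := rfl
      rw [hset, pi_cyl, pmfMeasure_singleton (heslab i), ENNReal.toReal_ofReal ((heslab i).1 k)]
    refine ⟨A, hA, hcard, ?_⟩
    rcases hbr with ⟨hint, hfeq⟩ | ⟨x, hx, hxA, hfeq⟩
    · left
      exact ⟨hint, fun k => by rw [hmarg k, hfeq]⟩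
    · right
      exact ⟨x, hx, hxA, fun k => by rw [hmarg k, hfeq]⟩
  · have hαpos : 0 < α := lt_trans one_pos hα
    rw [renyi_eq_Gfun ℙ n m α hαpos _ p (X_sum_eq_Lsum m n X hXm hXrange hindep),
      renyi_eq_Gfun _ n m α hαpos _ e (pi_sum_apply C e heslab)]
    have hinv : (1 - α)⁻¹ ≤ 0 := by
      apply inv_nonpos.mpr; linarith
    have hlog : Real.log (Gfun n m α p) ≤ Real.log (Gfun n m α e) :=
      Real.log_le_log (Gfun_pos hαpos C hp) hG
    exact mul_le_mul_of_nonpos_left hlog hinv
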